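/- Let γ ≥ 0, d > 0, λ > 0, and 0 < B < A. Then ∫_0^1 s^γ (1-s)^{d-1} / (A - B s)^{d+λ} ds ≤ (Γ(d) Γ(λ) / Γ(d+λ)) · 1 / (B^d (A - B)^λ), where Γ denotes the Gamma function. -/

import Mathlib

open MeasureTheory Real

lemma betaComplex_eq (a b : ℝ) :
    Complex.betaIntegral a b =
      ((∫ x in Set.Ioo (0:ℝ) 1, x ^ (a-1) * (1-x) ^ (b-1) : ℝ) : ℂ) := by
  rw [Complex.betaIntegral]
  rw [← MeasureTheory.integral_Ioc_eq_integral_Ioo,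
    ← intervalIntegral.integral_of_le (by norm_num : (0:ℝ) ≤ 1)]
  rw [← intervalIntegral.integral_ofReal]
  apply intervalIntegral.integral_congr
  intro x hx
  rw [Set.uIcc_of_le (by norm_num : (0:ℝ) ≤ 1)] at hx
  push_cast
  rw [Complex.ofReal_cpow hx.1, Complex.ofReal_cpow (by linarith [hx.2] : (0:ℝ) ≤ 1 - x)]
  push_cast
  ring

lemma betaReal_integrableOn (a b : ℝ) (ha : 0 < a) (hb : 0 < b) :
    IntegrableOn (fun x => x ^ (a-1) * (1-x) ^ (b-1)) (Set.Ioo (0:ℝ) 1) := by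
  have h := Complex.betaIntegral_convergent (u := a) (v := b) (by simpa) (by simpa)
  have h2 : IntegrableOn (fun x : ℝ => (x:ℂ) ^ ((a:ℂ)-1) * ((1:ℂ)-x) ^ ((b:ℂ)-1))
      (Set.Ioo (0:ℝ) 1) := by
    refine ((h.1).mono_set Set.Ioo_subset_Ioc_self)
  have h3 := h2.re
  refine (integrableOn_congr_fun ?_ measurableSet_Ioo).mp h3
  intro x hx
  have h1x : (0:ℝ) ≤ 1 - x := by linarith [hx.2.le]
  simp only
  rw [show ((a:ℂ)-1) = ((a-1:ℝ):ℂ) by push_cast; ring,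
    show ((b:ℂ)-1) = ((b-1:ℝ):ℂ) by push_cast; ring,
    show ((1:ℂ)-x) = ((1-x:ℝ):ℂ) by push_cast; ring,
    ← Complex.ofReal_cpow hx.1.le, ← Complex.ofReal_cpow h1x, ← Complex.ofReal_mul]
  simp

lemma betaReal_eq (a b : ℝ) (ha : 0 < a) (hb : 0 < b) :
    ∫ x in Set.Ioo (0:ℝ) 1, x ^ (a-1) * (1-x) ^ (b-1) =
      Real.Gamma a * Real.Gamma b / Real.Gamma (a+b) := by
  have h := Complex.Gamma_mul_Gamma_eq_betaIntegral (s := a) (t := b) (by simpa) (by simpa)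
  rw [betaComplex_eq] at h
  have hab : Real.Gamma (a+b) ≠ 0 := (Real.Gamma_pos_of_pos (by linarith)).ne'
  have : ((Real.Gamma a * Real.Gamma b : ℝ) : ℂ) =
      ((Real.Gamma (a+b) * ∫ x in Set.Ioo (0:ℝ) 1, x ^ (a-1) * (1-x) ^ (b-1) : ℝ) : ℂ) := by
    push_cast
    rw [← Complex.Gamma_ofReal, ← Complex.Gamma_ofReal]
    rw [h]
    rw [← Complex.Gamma_ofReal]
    push_cast
    ring
  have h2 := Complex.ofReal_injective this
  field_simp
  linarith [h2]


/-- Beta function bound with a nonnegative power of `s`: for `γ ≥ 0`, `d, λ > 0`, and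
`0 < B < A`, `∫_0^1 s^γ (1-s)^{d-1}/(A-Bs)^{d+λ} ds ≤ (Γ(d)Γ(λ)/Γ(d+λ)) B^{-d} (A-B)^{-λ}`. -/
theorem integral_with_power_le_beta (γ d lam A B : ℝ) (hγ : 0 ≤ γ) (hd : 0 < d)
    (hlam : 0 < lam) (hB : 0 < B) (hBA : B < A) :
    (∫ s in Set.Ioo (0 : ℝ) 1, s ^ γ * (1 - s) ^ (d - 1) / (A - B * s) ^ (d + lam)) ≤
      Real.Gamma d * Real.Gamma lam / Real.Gamma (d + lam) *
        (1 / (B ^ d * (A - B) ^ lam)) := by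
  set c : ℝ := A - B with hc
  have hc0 : 0 < c := by simp [hc]; linarith
  have hA : 0 < A := by linarith
  -- positivity of denominator on Ioo
  have hden : ∀ s ∈ Set.Ioo (0:ℝ) 1, 0 < A - B * s := by
    intro s hs
    nlinarith [hs.1, hs.2]
  set f : ℝ → ℝ := fun s => B * (1 - s) / (A - B * s) with hf
  set f' : ℝ → ℝ := fun s => -(B * c) / (A - B * s) ^ 2 with hf'
  set g : ℝ → ℝ := fun u => u ^ (d - 1) * (1 - u) ^ (lam - 1) with hg
  have hderiv : ∀ s ∈ Set.Ioo (0:ℝ) 1, HasDerivWithinAt f (f' s) (Set.Ioo (0:ℝ) 1) s := by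
    intro s hs
    have hds := (hden s hs).ne'
    have h1 : HasDerivAt f (((-B) * (A - B * s) - (B * (1 - s)) * (-B)) / (A - B * s) ^ 2) s := by
      have hu : HasDerivAt (fun s : ℝ => B * (1 - s)) (-B) s := by
        simpa using ((hasDerivAt_const s (1:ℝ)).sub (hasDerivAt_id s)).const_mul B
      have hv : HasDerivAt (fun s : ℝ => A - B * s) (-B) s := by
        simpa using ((hasDerivAt_id s).const_mul B).const_sub A
      exact hu.div hv hds
    have : ((-B) * (A - B * s) - (B * (1 - s)) * (-B)) / (A - B * s) ^ 2 = f' s := by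
      rw [hf']
      field_simp
      ring
    exact (this ▸ h1).hasDerivWithinAt
  have hinj : Set.InjOn f (Set.Ioo (0:ℝ) 1) := by
    intro s hs t ht h
    have hds := (hden s hs).ne'
    have hdt := (hden t ht).ne'
    rw [hf] at h
    field_simp at h
    have h3 : B * c * (s - t) = 0 := by linear_combination -B * h
    have := mul_ne_zero hB.ne' hc0.ne'
    have : s - t = 0 := by
      rcases mul_eq_zero.mp h3 with h4 | h4
      · exact absurd h4 this
      · exact h4
    linarith
  have himg : f '' Set.Ioo (0:ℝ) 1 = Set.Ioo (0:ℝ) (B / A) := by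
    ext u
    constructor
    · rintro ⟨s, hs, rfl⟩
      have hd0 := hden s hs
      constructor
      · rw [hf]
        have h1s : 0 < 1 - s := by linarith [hs.2]
        positivity
      · rw [hf, div_lt_div_iff₀ hd0 hA]
        nlinarith [mul_pos (mul_pos hB hc0) hs.1]
    · intro hu
      have hu1 : u < 1 := lt_trans hu.2 (by rw [div_lt_one hA]; exact hBA)
      have h1u : 0 < 1 - u := by linarith
      have hBAu : 0 < B - A * u := by
        have := hu.2
        rw [lt_div_iff₀ hA] at this
        linarith
      refine ⟨(B - A * u) / (B * (1 - u)), ⟨?_, ?_⟩, ?_⟩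
      · positivity
      · rw [div_lt_one (by positivity)]
        nlinarith [hu.1]
      · rw [hf]
        show B * (1 - (B - A * u) / (B * (1 - u))) / (A - B * ((B - A * u) / (B * (1 - u)))) = u
        have hden2 : A - B * ((B - A * u) / (B * (1 - u))) = c / (1 - u) := by
          rw [hc]
          field_simp
          ring
        rw [hden2]
        field_simp
        ring
  have hchg := MeasureTheory.integral_image_eq_integral_abs_deriv_smul measurableSet_Ioo hderiv hinj g
  rw [himg] at hchg
  have hptwise : ∀ s ∈ Set.Ioo (0:ℝ) 1,
      |f' s| • g (f s) = B ^ d * c ^ lam * ((1 - s) ^ (d-1) / (A - B*s) ^ (d+lam)) := by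
    intro s hs
    have hX : 0 < A - B * s := hden s hs
    have h1s : 0 < 1 - s := by linarith [hs.2]
    have e1 : |f' s| = B * c / (A - B*s)^2 := by
      rw [hf']
      rw [abs_div, abs_neg, abs_of_pos (by positivity), abs_of_pos (by positivity)]
    rw [smul_eq_mul, e1, hg, hf]
    show B * c / (A - B*s)^2 * ((B * (1-s) / (A - B*s)) ^ (d-1) * ((1:ℝ) - B * (1-s) / (A - B*s)) ^ (lam-1)) = _
    have e3 : (1:ℝ) - B * (1-s) / (A - B*s) = c / (A - B*s) := by
      rw [hc]; field_simp; ring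
    rw [e3, Real.div_rpow (by positivity) hX.le, Real.div_rpow hc0.le hX.le,
      Real.mul_rpow hB.le h1s.le]
    have hBd : B ^ d = B * B ^ (d-1) := by
      rw [show d = 1 + (d-1) by ring, Real.rpow_add hB, Real.rpow_one]; ring_nf
    have hcl : c ^ lam = c * c ^ (lam-1) := by
      rw [show lam = 1 + (lam-1) by ring, Real.rpow_add hc0, Real.rpow_one]; ring_nf
    have hXd : (A - B*s) ^ (d+lam) = (A - B*s)^2 * ((A - B*s) ^ (d-1) * (A - B*s) ^ (lam-1)) := by
      rw [show d + lam = ((2:ℕ):ℝ) + ((d-1)+(lam-1)) by push_cast; ring,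
        Real.rpow_add hX, Real.rpow_add hX, Real.rpow_natCast]
    rw [hBd, hcl, hXd]
    have n1 : (A - B*s) ^ (d-1) ≠ 0 := (Real.rpow_pos_of_pos hX _).ne'
    have n2 : (A - B*s) ^ (lam-1) ≠ 0 := (Real.rpow_pos_of_pos hX _).ne'
    have n3 : (A - B*s) ≠ 0 := hX.ne'
    field_simp
  have key : ∫ u in Set.Ioo (0:ℝ) (B/A), g u
      = B ^ d * c ^ lam * ∫ s in Set.Ioo (0:ℝ) 1, (1-s) ^ (d-1) / (A - B*s) ^ (d+lam) := by
    rw [hchg, ← MeasureTheory.integral_const_mul]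
    exact MeasureTheory.setIntegral_congr_fun measurableSet_Ioo hptwise
  have hg_int : IntegrableOn g (Set.Ioo (0:ℝ) 1) := betaReal_integrableOn d lam hd hlam
  have hBA1 : B / A ≤ 1 := by rw [div_le_one hA]; exact hBA.le
  have hg_int' : IntegrableOn g (Set.Ioo (0:ℝ) (B/A)) :=
    hg_int.mono_set (Set.Ioo_subset_Ioo_right hBA1)
  have h_int0 : IntegrableOn (fun s => |f' s| • g (f s)) (Set.Ioo (0:ℝ) 1) :=
    (MeasureTheory.integrableOn_image_iff_integrableOn_abs_deriv_smul
      measurableSet_Ioo hderiv hinj g).mp (himg ▸ hg_int')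
  have hKpos : 0 < B ^ d * c ^ lam := by positivity
  have h_int1 : IntegrableOn (fun s => (1-s) ^ (d-1) / (A - B*s) ^ (d+lam)) (Set.Ioo (0:ℝ) 1) := by
    have h2 := h_int0.const_mul (B ^ d * c ^ lam)⁻¹
    refine (integrableOn_congr_fun ?_ measurableSet_Ioo).mp h2
    intro s hs
    simp only
    rw [hptwise s hs]
    field_simp
  have h_int2 : IntegrableOn (fun s => s ^ γ * (1-s) ^ (d-1) / (A - B*s) ^ (d+lam))
      (Set.Ioo (0:ℝ) 1) := by
    refine h_int1.mono' ?_ ?_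
    · exact (((measurable_id.pow_const γ).mul
        ((measurable_const.sub measurable_id).pow_const _)).div
        ((measurable_const.sub (measurable_id.const_mul B)).pow_const _)).aestronglyMeasurable
    · rw [ae_restrict_iff' measurableSet_Ioo]
      filter_upwards with s hs
      have hX : 0 < A - B * s := hden s hs
      have h1s : 0 < 1 - s := by linarith [hs.2]
      have hsγ : s ^ γ ≤ 1 := Real.rpow_le_one hs.1.le hs.2.le hγ
      have hpos : 0 < (1-s) ^ (d-1) / (A - B*s) ^ (d+lam) :=
        div_pos (Real.rpow_pos_of_pos h1s _) (Real.rpow_pos_of_pos hX _)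
      rw [Real.norm_eq_abs, abs_of_nonneg (div_nonneg (mul_nonneg (Real.rpow_nonneg hs.1.le _)
        (Real.rpow_nonneg h1s.le _)) (Real.rpow_pos_of_pos hX _).le)]
      calc s ^ γ * (1-s) ^ (d-1) / (A - B*s) ^ (d+lam)
          = s ^ γ * ((1-s) ^ (d-1) / (A - B*s) ^ (d+lam)) := by ring
        _ ≤ 1 * ((1-s) ^ (d-1) / (A - B*s) ^ (d+lam)) :=
            mul_le_mul_of_nonneg_right hsγ hpos.le
        _ = (1-s) ^ (d-1) / (A - B*s) ^ (d+lam) := one_mul _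
  have step1 : (∫ s in Set.Ioo (0:ℝ) 1, s ^ γ * (1 - s) ^ (d - 1) / (A - B * s) ^ (d + lam))
      ≤ ∫ s in Set.Ioo (0:ℝ) 1, (1-s) ^ (d-1) / (A - B*s) ^ (d+lam) := by
    refine MeasureTheory.setIntegral_mono_on h_int2 h_int1 measurableSet_Ioo ?_
    intro s hs
    have hX : 0 < A - B * s := hden s hs
    have h1s : 0 < 1 - s := by linarith [hs.2]
    have hsγ : s ^ γ ≤ 1 := Real.rpow_le_one hs.1.le hs.2.le hγ
    have hpos : 0 < (1-s) ^ (d-1) / (A - B*s) ^ (d+lam) :=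
      div_pos (Real.rpow_pos_of_pos h1s _) (Real.rpow_pos_of_pos hX _)
    calc s ^ γ * (1-s) ^ (d-1) / (A - B*s) ^ (d+lam)
        = s ^ γ * ((1-s) ^ (d-1) / (A - B*s) ^ (d+lam)) := by ring
      _ ≤ 1 * ((1-s) ^ (d-1) / (A - B*s) ^ (d+lam)) := mul_le_mul_of_nonneg_right hsγ hpos.le
      _ = (1-s) ^ (d-1) / (A - B*s) ^ (d+lam) := one_mul _
  have step2 : ∫ s in Set.Ioo (0:ℝ) 1, (1-s) ^ (d-1) / (A - B*s) ^ (d+lam)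
      = (B ^ d * c ^ lam)⁻¹ * ∫ u in Set.Ioo (0:ℝ) (B/A), g u := by
    rw [key, ← mul_assoc, inv_mul_cancel₀ hKpos.ne', one_mul]
  have step3 : ∫ u in Set.Ioo (0:ℝ) (B/A), g u ≤ ∫ u in Set.Ioo (0:ℝ) 1, g u := by
    refine MeasureTheory.setIntegral_mono_set hg_int ?_ ?_
    · filter_upwards [ae_restrict_mem measurableSet_Ioo] with u hu
      have h1u : 0 < 1 - u := by linarith [hu.2]
      simp only [Pi.zero_apply, hg]
      exact mul_nonneg (Real.rpow_nonneg hu.1.le _) (Real.rpow_nonneg h1u.le _)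
    · exact HasSubset.Subset.eventuallyLE (Set.Ioo_subset_Ioo_right hBA1)
  have step4 : ∫ u in Set.Ioo (0:ℝ) 1, g u = Real.Gamma d * Real.Gamma lam / Real.Gamma (d+lam) := by
    rw [hg]
    exact betaReal_eq d lam hd hlam
  calc (∫ s in Set.Ioo (0:ℝ) 1, s ^ γ * (1 - s) ^ (d - 1) / (A - B * s) ^ (d + lam))
      ≤ ∫ s in Set.Ioo (0:ℝ) 1, (1-s) ^ (d-1) / (A - B*s) ^ (d+lam) := step1
    _ = (B ^ d * c ^ lam)⁻¹ * ∫ u in Set.Ioo (0:ℝ) (B/A), g u := step2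
    _ ≤ (B ^ d * c ^ lam)⁻¹ * ∫ u in Set.Ioo (0:ℝ) 1, g u := by
        exact mul_le_mul_of_nonneg_left step3 (by positivity)
    _ = Real.Gamma d * Real.Gamma lam / Real.Gamma (d+lam) * (1 / (B ^ d * c ^ lam)) := by
        rw [step4]; ring
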